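/- Tournament expansion: if X = (V, E) is a tournament, then for every coloring f : V → ℤ⁺, N(f, X) = Σ 2^{ψ(σ)}, where the sum is over all permutations σ ∈ 𝕊_V(X) all of whose cycles have odd length and such that f is constant on each cycle of σ, and ψ(σ) is the number of nontrivial cycles of σ. (Equivalently, W_X = Σ_{σ ∈ 𝕊_V(X), all cycles of σ odd} 2^{ψ(σ)} p_{Type(σ)}.) -/

import Mathlib

/-- A `V`-listing `σ` (a bijection `Fin n ≃ V`) is `(f, X)`-friendly for the digraph with
edge set `E` and the coloring `f` if the colors are weakly increasing along the listing,
and strictly increase along every edge of the digraph. -/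
def Friendly {V : Type*} [Fintype V] (E : Set (V × V)) (f : V → ℕ+)
    (σ : Fin (Fintype.card V) ≃ V) : Prop :=
  Monotone (fun i => f (σ i)) ∧
  ∀ i : Fin (Fintype.card V), ∀ h : (i : ℕ) + 1 < Fintype.card V,
    (σ i, σ ⟨(i : ℕ) + 1, h⟩) ∈ E → f (σ i) < f (σ ⟨(i : ℕ) + 1, h⟩)

/-- `redeiBergeCount E f` is `N(f, X)`, the number of `(f, X)`-friendly `V`-listings
of the digraph `X = (V, E)`. -/
noncomputable def redeiBergeCount {V : Type*} [Fintype V] (E : Set (V × V)) (f : V → ℕ+) : ℕ :=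
  Nat.card {σ : Fin (Fintype.card V) ≃ V // Friendly E f σ}

/-- A cycle `c` of a permutation (given as one of its cycle factors, with underlying orbit
`c.support`) is a cycle of the digraph with edge set `E` if `(w, c w) ∈ E` for every
vertex `w` of the cycle. -/
def IsDigraphCycle {V : Type*} [Fintype V] [DecidableEq V] (E : Set (V × V))
    (c : Equiv.Perm V) : Prop :=
  ∀ w ∈ c.support, (w, c w) ∈ E

/-- `σ ∈ 𝕊_V(X)`: every nontrivial cycle of the permutation `σ` is a cycle of `X`. -/
def MemSVX {V : Type*} [Fintype V] [DecidableEq V] (E : Set (V × V))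
    (σ : Equiv.Perm V) : Prop :=
  ∀ c ∈ σ.cycleFactorsFinset, IsDigraphCycle E c

namespace RedeiBergeAux

open Equiv Equiv.Perm Finset

variable {V : Type*} [Fintype V] [DecidableEq V]

theorem chain'_iff_get_compat {α : Type*} {R : α → α → Prop} {l : List α} :
    l.Chain' R ↔ ∀ (i : ℕ) (h : i < l.length - 1),
      R (l.get ⟨i, by omega⟩) (l.get ⟨i + 1, by omega⟩) := by
  constructor
  · intro h i hi; exact List.isChain_iff_getElem.mp h i (by omega)
  · intro h; exact List.isChain_iff_getElem.mpr fun i hi => h i (by omega)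

def PairCond (E : Set (V × V)) (f : V → ℕ+) (p : Perm V × Perm V) : Prop :=
  p.1.Disjoint p.2 ∧ (∀ w, p.1 w ≠ w → (w, p.1 w) ∈ E) ∧
    (∀ w, p.2 w ≠ w → (w, p.2 w) ∉ E) ∧ (∀ w, f (p.1 w) = f w) ∧ (∀ w, f (p.2 w) = f w)

open Classical in
noncomputable def pairSum (E : Set (V × V)) (f : V → ℕ+) : ℤ :=
  ∑ p : Perm V × Perm V, if PairCond E f p then (Perm.sign p.1 : ℤ) else 0

/-- product of a pairwise-disjoint finset of cycles taken from the factors of `σ` -/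
noncomputable def prodOf (σ : Perm V) (s : Finset (Perm V))
    (hs : s ⊆ σ.cycleFactorsFinset) : Perm V :=
  s.noncommProd id (((σ.cycleFactorsFinset_pairwise_disjoint).mono hs).mono'
    fun _ _ => Equiv.Perm.Disjoint.commute)

lemma cycleFactorsFinset_prodOf (σ : Perm V) (s : Finset (Perm V))
    (hs : s ⊆ σ.cycleFactorsFinset) : (prodOf σ s hs).cycleFactorsFinset = s := by
  apply cycleFactorsFinset_eq_finset.mpr
  refine ⟨fun c hc => (mem_cycleFactorsFinset_iff.mp (hs hc)).1,
    (σ.cycleFactorsFinset_pairwise_disjoint).mono hs, rfl⟩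

lemma mem_support_prodOf {σ : Perm V} {s : Finset (Perm V)}
    {hs : s ⊆ σ.cycleFactorsFinset} {w : V} :
    w ∈ (prodOf σ s hs).support ↔ ∃ c ∈ s, w ∈ c.support := by
  rw [mem_support_iff_mem_support_of_mem_cycleFactorsFinset, cycleFactorsFinset_prodOf]

lemma prodOf_apply_mem {σ : Perm V} {s : Finset (Perm V)}
    {hs : s ⊆ σ.cycleFactorsFinset} {c : Perm V} (hc : c ∈ s) {w : V}
    (hw : w ∈ c.support) : prodOf σ s hs w = σ w := by
  have h1 : c ∈ (prodOf σ s hs).cycleFactorsFinset := by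
    rw [cycleFactorsFinset_prodOf]; exact hc
  have h2 := (mem_cycleFactorsFinset_iff.mp h1).2 w hw
  have h3 := (mem_cycleFactorsFinset_iff.mp (hs hc)).2 w hw
  rw [← h2, h3]

lemma prodOf_apply_eq_self_or {σ : Perm V} {s : Finset (Perm V)}
    {hs : s ⊆ σ.cycleFactorsFinset} {w : V} :
    prodOf σ s hs w = w ∨ prodOf σ s hs w = σ w := by
  by_cases h : w ∈ (prodOf σ s hs).support
  · obtain ⟨c, hc, hw⟩ := mem_support_prodOf.mp h
    exact Or.inr (prodOf_apply_mem hc hw)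
  · exact Or.inl (by rwa [notMem_support] at h)


open Classical in
theorem partB (E : Set (V × V))
    (htour : ∀ u v : V, u ≠ v → ((u, v) ∈ E ↔ (v, u) ∉ E)) (f : V → ℕ+) :
    pairSum E f = ∑ σ : Perm V,
      if MemSVX E σ ∧ (∀ c ∈ σ.cycleFactorsFinset, Odd c.support.card) ∧
          (∀ w : V, f (σ w) = f w)
      then (2 : ℤ) ^ σ.cycleFactorsFinset.card else 0 := by
  classical
  have step1 : pairSum E f = ∑ p ∈ Finset.univ.filter (PairCond E f), (Perm.sign p.1 : ℤ) := by
    rw [pairSum, sum_filter]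
  have step2 : ∑ p ∈ Finset.univ.filter (PairCond E f), (Perm.sign p.1 : ℤ) =
      ∑ x ∈ ((Finset.univ.filter fun σ : Perm V =>
          MemSVX E σ ∧ ∀ w : V, f (σ w) = f w)).sigma
          (fun σ => σ.cycleFactorsFinset.powerset),
        ∏ c ∈ x.1.cycleFactorsFinset \ x.2, (Perm.sign c : ℤ) := by
    refine Finset.sum_bij' (fun p _ => ⟨p.1 * p.2⁻¹, p.2⁻¹.cycleFactorsFinset⟩)
      (fun x hx => (prodOf x.1 (x.1.cycleFactorsFinset \ x.2) sdiff_subset,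
        (prodOf x.1 x.2 (mem_powerset.mp (mem_sigma.mp hx).2))⁻¹)) ?_ ?_ ?_ ?_ ?_
    · -- hi : image of pair is in the sigma set
      rintro ⟨p1, p2⟩ hp
      obtain ⟨hdisj, h1E, h2E, h1f, h2f⟩ := mem_filter.mp hp |>.2
      simp only at hdisj h1E h2E h1f h2f
      have hd' : p1.Disjoint p2⁻¹ := by
        rw [disjoint_iff_disjoint_support, support_inv]
        exact disjoint_iff_disjoint_support.mp hdisj
      have hu : (p1 * p2⁻¹).cycleFactorsFinset =
          p1.cycleFactorsFinset ∪ p2⁻¹.cycleFactorsFinset :=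
        hd'.cycleFactorsFinset_mul_eq_union
      rw [mem_sigma]
      constructor
      · rw [mem_filter]
        refine ⟨mem_univ _, ?_, ?_⟩
        · intro c hc
          rw [hu, mem_union] at hc
          rcases hc with hc | hc
          · intro w hw
            have hcw := (mem_cycleFactorsFinset_iff.mp hc).2 w hw
            have hws : w ∈ p1.support := mem_cycleFactorsFinset_support_le hc hw
            rw [hcw]
            exact h1E w (mem_support.mp hws)
          · intro w hw
            have hcw := (mem_cycleFactorsFinset_iff.mp hc).2 w hw
            have hws : p2⁻¹ w ≠ w := by
              have h' : w ∈ p2⁻¹.support := mem_cycleFactorsFinset_support_le hc hw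
              exact mem_support.mp h'
            have hyw : p2 (p2⁻¹ w) = w := p2.apply_symm_apply w
            have hyy : p2 (p2⁻¹ w) ≠ p2⁻¹ w := by rw [hyw]; exact Ne.symm hws
            have hnyw : (p2⁻¹ w, w) ∉ E := by
              have h' := h2E (p2⁻¹ w) hyy
              rwa [hyw] at h'
            rw [hcw]
            exact (htour w (p2⁻¹ w) (Ne.symm hws)).mpr hnyw
        · intro w
          have : (p1 * p2⁻¹) w = p1 (p2⁻¹ w) := rfl
          rw [this, h1f (p2⁻¹ w)]
          have h' := h2f (p2⁻¹ w)
          rw [show ∀ x, p2 (p2⁻¹ x) = x from p2.apply_symm_apply] at h'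
          exact h'.symm
      · rw [mem_powerset, hu]
        exact subset_union_right
    · -- hj : preimage in filter
      rintro ⟨σ, T⟩ hx
      obtain ⟨hσ, hT⟩ := mem_sigma.mp hx
      obtain ⟨-, hSVX, hfinv⟩ := mem_filter.mp hσ
      have hT' : T ⊆ σ.cycleFactorsFinset := mem_powerset.mp hT
      set a := prodOf σ (σ.cycleFactorsFinset \ T) sdiff_subset with ha
      set b := prodOf σ T hT' with hb
      have hdisj : a.Disjoint b := by
        rw [disjoint_iff_disjoint_support, Finset.disjoint_left]
        intro w hwa hwb
        obtain ⟨c, hc, hwc⟩ := mem_support_prodOf.mp hwa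
        obtain ⟨c', hc', hwc'⟩ := mem_support_prodOf.mp hwb
        have hcc' : c ≠ c' := by
          rintro rfl
          exact (mem_sdiff.mp hc).2 hc'
        have := σ.cycleFactorsFinset_pairwise_disjoint (mem_sdiff.mp hc).1 (hT' hc') hcc'
        rw [disjoint_iff_disjoint_support, Finset.disjoint_left] at this
        exact this hwc hwc'
      have hbf : ∀ w, f (b w) = f w := by
        intro w
        rcases prodOf_apply_eq_self_or (hs := hT') (w := w) with h | h
        · rw [← hb] at h; rw [h]
        · rw [← hb] at h; rw [h]; exact hfinv w
      rw [mem_filter]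
      refine ⟨mem_univ _, ?_, ?_, ?_, ?_, ?_⟩
      · -- Disjoint a b⁻¹
        simp only
        rw [disjoint_iff_disjoint_support, support_inv]
        exact disjoint_iff_disjoint_support.mp hdisj
      · intro w hw
        simp only at hw ⊢
        have hws : w ∈ a.support := mem_support.mpr hw
        obtain ⟨c, hc, hwc⟩ := mem_support_prodOf.mp hws
        have haw : a w = σ w := prodOf_apply_mem hc hwc
        have hcw := (mem_cycleFactorsFinset_iff.mp ((sdiff_subset : _ ⊆ σ.cycleFactorsFinset) hc)).2 w hwc
        rw [haw, ← hcw]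
        exact hSVX c ((sdiff_subset) hc) w hwc
      · intro w hw
        simp only at hw ⊢
        have hyy : b (b⁻¹ w) ≠ b⁻¹ w := by rw [show ∀ x, b (b⁻¹ x) = x from b.apply_symm_apply]; exact Ne.symm hw
        have hys : b⁻¹ w ∈ b.support := mem_support.mpr hyy
        obtain ⟨c, hc, hyc⟩ := mem_support_prodOf.mp hys
        have hby : b (b⁻¹ w) = σ (b⁻¹ w) := prodOf_apply_mem hc hyc
        have hcy := (mem_cycleFactorsFinset_iff.mp (hT' hc)).2 _ hyc
        have hEyw : (b⁻¹ w, w) ∈ E := by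
          have h' := hSVX c (hT' hc) _ hyc
          rwa [hcy, ← hby, show ∀ x, b (b⁻¹ x) = x from b.apply_symm_apply] at h'
        exact fun hEwy => ((htour w (b⁻¹ w) (Ne.symm hw)).mp hEwy) hEyw
      · intro w
        simp only
        rcases prodOf_apply_eq_self_or (hs := (sdiff_subset : _ ⊆ σ.cycleFactorsFinset)) (w := w) with h | h
        · rw [← ha] at h; rw [h]
        · rw [← ha] at h; rw [h]; exact hfinv w
      · intro w
        simp only
        have h' := hbf (b⁻¹ w)
        rw [show ∀ x, b (b⁻¹ x) = x from b.apply_symm_apply] at h'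
        exact h'.symm
    · -- left inverse
      rintro ⟨p1, p2⟩ hp
      obtain ⟨hdisj, h1E, h2E, h1f, h2f⟩ := mem_filter.mp hp |>.2
      simp only at hdisj h1E h2E h1f h2f
      have hd' : p1.Disjoint p2⁻¹ := by
        rw [disjoint_iff_disjoint_support, support_inv]
        exact disjoint_iff_disjoint_support.mp hdisj
      have hu : (p1 * p2⁻¹).cycleFactorsFinset =
          p1.cycleFactorsFinset ∪ p2⁻¹.cycleFactorsFinset :=
        hd'.cycleFactorsFinset_mul_eq_union
      have hdf : _root_.Disjoint p1.cycleFactorsFinset p2⁻¹.cycleFactorsFinset :=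
        hd'.disjoint_cycleFactorsFinset
      have h1 : (p1 * p2⁻¹).cycleFactorsFinset \ p2⁻¹.cycleFactorsFinset =
          p1.cycleFactorsFinset := by
        rw [hu, union_sdiff_cancel_right hdf]
      ext <;> simp only
      · show prodOf _ _ _ _ = p1 _
        have : prodOf (p1 * p2⁻¹) ((p1 * p2⁻¹).cycleFactorsFinset \ p2⁻¹.cycleFactorsFinset)
            sdiff_subset = p1 := by
          rw [prodOf]
          rw [Finset.noncommProd_congr h1 (fun x _ => rfl)]
          exact cycleFactorsFinset_noncommProd p1
        rw [this]
      · show (prodOf _ _ _)⁻¹ _ = p2 _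
        have : prodOf (p1 * p2⁻¹) (p2⁻¹.cycleFactorsFinset)
            (mem_powerset.mp (by rw [mem_powerset, hu]; exact subset_union_right)) = p2⁻¹ := by
          rw [prodOf]
          rw [Finset.noncommProd_congr rfl (fun x _ => rfl)]
          exact cycleFactorsFinset_noncommProd p2⁻¹
        rw [this, inv_inv]
    · -- right inverse
      rintro ⟨σ, T⟩ hx
      obtain ⟨hσ, hT⟩ := mem_sigma.mp hx
      have hT' : T ⊆ σ.cycleFactorsFinset := mem_powerset.mp hT
      have hab : prodOf σ (σ.cycleFactorsFinset \ T) sdiff_subset *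
          ((prodOf σ T hT')⁻¹)⁻¹ = σ := by
        rw [inv_inv, prodOf, prodOf]
        rw [← Finset.noncommProd_union_of_disjoint sdiff_disjoint id
          (by rw [show σ.cycleFactorsFinset \ T ∪ T = σ.cycleFactorsFinset from
              sdiff_union_of_subset hT']
              exact (σ.cycleFactorsFinset_pairwise_disjoint).mono' fun _ _ =>
                Equiv.Perm.Disjoint.commute)]
        rw [Finset.noncommProd_congr (sdiff_union_of_subset hT') (fun x _ => rfl)]
        exact cycleFactorsFinset_noncommProd σ
      have hTb : ((prodOf σ T hT')⁻¹)⁻¹.cycleFactorsFinset = T := by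
        rw [inv_inv, cycleFactorsFinset_prodOf]
      refine Sigma.ext ?_ ?_
      · exact hab
      · rw [heq_eq_eq]
        exact hTb
    · -- weights
      rintro ⟨p1, p2⟩ hp
      obtain ⟨hdisj, h1E, h2E, h1f, h2f⟩ := mem_filter.mp hp |>.2
      simp only at hdisj h1E h2E h1f h2f ⊢
      have hd' : p1.Disjoint p2⁻¹ := by
        rw [disjoint_iff_disjoint_support, support_inv]
        exact disjoint_iff_disjoint_support.mp hdisj
      have hu : (p1 * p2⁻¹).cycleFactorsFinset =
          p1.cycleFactorsFinset ∪ p2⁻¹.cycleFactorsFinset :=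
        hd'.cycleFactorsFinset_mul_eq_union
      have hdf : _root_.Disjoint p1.cycleFactorsFinset p2⁻¹.cycleFactorsFinset :=
        hd'.disjoint_cycleFactorsFinset
      have h1 : (p1 * p2⁻¹).cycleFactorsFinset \ p2⁻¹.cycleFactorsFinset =
          p1.cycleFactorsFinset := by
        rw [hu, union_sdiff_cancel_right hdf]
      rw [h1]
      have : Perm.sign p1 = ∏ c ∈ p1.cycleFactorsFinset, Perm.sign c := by
        conv_lhs => rw [← cycleFactorsFinset_noncommProd p1]
        rw [Finset.map_noncommProd]
        rw [Finset.noncommProd_eq_prod]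
        simp only [id_eq]
      rw [this]
      push_cast
      rfl
  have step3 : ∀ σ : Perm V,
      ∑ T ∈ σ.cycleFactorsFinset.powerset, ∏ c ∈ σ.cycleFactorsFinset \ T, (Perm.sign c : ℤ) =
      ∏ c ∈ σ.cycleFactorsFinset, (1 + (Perm.sign c : ℤ)) := by
    intro σ
    rw [Finset.prod_add]
    refine Finset.sum_congr rfl fun T hT => ?_
    rw [Finset.prod_const_one, one_mul]
  have step4 : ∀ σ : Perm V,
      ∏ c ∈ σ.cycleFactorsFinset, (1 + (Perm.sign c : ℤ)) =
      (if (∀ c ∈ σ.cycleFactorsFinset, Odd c.support.card) then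
        (2 : ℤ) ^ σ.cycleFactorsFinset.card else 0) := by
    intro σ
    by_cases h : ∀ c ∈ σ.cycleFactorsFinset, Odd c.support.card
    · rw [if_pos h]
      rw [Finset.prod_congr rfl (g := fun _ => (2:ℤ)) (fun c hc => ?_), Finset.prod_const]
      have hcyc : c.IsCycle := (mem_cycleFactorsFinset_iff.mp hc).1
      rw [hcyc.sign, Odd.neg_one_pow (h c hc)]
      all_goals norm_num
    · rw [if_neg h]
      push_neg at h
      obtain ⟨c, hc, hev⟩ := h
      refine Finset.prod_eq_zero hc ?_
      have hcyc : c.IsCycle := (mem_cycleFactorsFinset_iff.mp hc).1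
      rw [Nat.not_odd_iff_even] at hev
      rw [hcyc.sign, hev.neg_one_pow]
      all_goals norm_num
  rw [step1, step2, Finset.sum_sigma]
  rw [Finset.sum_congr rfl (fun σ hσ => (step3 σ).trans (step4 σ))]
  rw [sum_filter]
  refine Finset.sum_congr rfl fun σ _ => ?_
  by_cases h1 : MemSVX E σ ∧ ∀ w : V, f (σ w) = f w
  · rw [if_pos h1]
    by_cases h2 : ∀ c ∈ σ.cycleFactorsFinset, Odd c.support.card
    · rw [if_pos h2, if_pos ⟨h1.1, h2, h1.2⟩]
    · rw [if_neg h2, if_neg (fun hcon => h2 hcon.2.1)]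
  · rw [if_neg h1]
    rw [if_neg (fun hcon => h1 ⟨hcon.1, hcon.2.2⟩)]


/-! ### Lists framework -/

def chainRel (E : Set (V × V)) (f : V → ℕ+) (a b : V) : Prop :=
  f a ≤ f b ∧ ((a, b) ∈ E → f a < f b)

def GoodL (E : Set (V × V)) (f : V → ℕ+) (l : List V) : Prop :=
  l.Nodup ∧ (∀ x : V, x ∈ l) ∧ l.Chain' (chainRel E f)

lemma mono_aux {n : ℕ} {g : Fin n → ℕ+}
    (hstep : ∀ (i : ℕ) (h : i + 1 < n), g ⟨i, Nat.lt_of_succ_lt h⟩ ≤ g ⟨i + 1, h⟩) :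
    ∀ (k i : ℕ) (hi : i < n) (hik : i + k < n), g ⟨i, hi⟩ ≤ g ⟨i + k, hik⟩ := by
  intro k
  induction k with
  | zero => intro i hi hik; exact le_refl _
  | succ k ih =>
    intro i hi hik
    have h1 : i + k < n := by omega
    refine le_trans (ih i hi h1) ?_
    have h2 := hstep (i + k) (by omega)
    have h3 : (⟨i + k + 1, by omega⟩ : Fin n) = ⟨i + (k + 1), hik⟩ := by
      apply Fin.ext; simp [Nat.add_assoc]
    rwa [h3] at h2

lemma monotone_iff_consec {n : ℕ} {g : Fin n → ℕ+} :
    Monotone g ↔ ∀ (i : ℕ) (h : i + 1 < n), g ⟨i, Nat.lt_of_succ_lt h⟩ ≤ g ⟨i + 1, h⟩ := by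
  constructor
  · intro hm i h
    exact hm (by simp [Fin.mk_le_mk])
  · intro hstep i j hij
    have h1 : (⟨(i : ℕ) + ((j : ℕ) - (i : ℕ)), by omega⟩ : Fin n) = j := by
      apply Fin.ext; simp; omega
    calc g i = g ⟨(i : ℕ), i.isLt⟩ := by congr
    _ ≤ g ⟨(i : ℕ) + ((j : ℕ) - (i : ℕ)), by omega⟩ := mono_aux hstep _ _ _ _
    _ = g j := by rw [h1]

lemma friendly_iff_ofFn (E : Set (V × V)) (f : V → ℕ+) (σ : Fin (Fintype.card V) ≃ V) :
    Friendly E f σ ↔ GoodL E f (List.ofFn σ) := by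
  have hnd : (List.ofFn σ).Nodup := List.nodup_ofFn.mpr σ.injective
  have hmem : ∀ x : V, x ∈ List.ofFn σ := fun x =>
    (List.mem_ofFn).mpr (σ.surjective x)
  have hget : ∀ (i : ℕ) (h : i < (List.ofFn σ).length),
      (List.ofFn σ).get ⟨i, h⟩ = σ ⟨i, by simpa using h⟩ := by
    intro i h
    rw [List.get_ofFn]
    congr 1
  constructor
  · rintro ⟨hmono, hedge⟩
    refine ⟨hnd, hmem, ?_⟩
    rw [chain'_iff_get_compat]
    intro i h
    rw [List.length_ofFn] at h
    have h1 : i + 1 < Fintype.card V := by omega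
    rw [hget i (by simp only [List.length_ofFn]; omega),
      hget (i+1) (by simp only [List.length_ofFn]; omega)]
    constructor
    · exact monotone_iff_consec.mp hmono i h1
    · intro hEe
      exact hedge ⟨i, Nat.lt_of_succ_lt h1⟩ h1 hEe
  · rintro ⟨-, -, hch⟩
    rw [chain'_iff_get_compat] at hch
    constructor
    · rw [show (fun i => f (σ i)) = fun i => f (σ i) from rfl]
      apply monotone_iff_consec.mpr
      intro i h
      have h2 : i < (List.ofFn σ).length - 1 := by simp only [List.length_ofFn]; omega
      have h4 := hch i h2
      rw [hget i (by simp only [List.length_ofFn]; omega),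
        hget (i+1) (by simp only [List.length_ofFn]; omega)] at h4
      exact h4.1
    · intro i h hEe
      have h2 : (i : ℕ) < (List.ofFn σ).length - 1 := by
        simp only [List.length_ofFn]; omega
      have h4 := hch (i : ℕ) h2
      rw [hget (i : ℕ) (by simp only [List.length_ofFn]; omega),
        hget ((i : ℕ)+1) (by simp only [List.length_ofFn]; omega)] at h4
      have h3 : (⟨(i : ℕ), by omega⟩ : Fin (Fintype.card V)) = i := by apply Fin.ext; rfl
      rw [h3] at h4
      exact h4.2 hEe

lemma exists_listing (l : List V) (hn : l.Nodup) (hm : ∀ x : V, x ∈ l) :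
    ∃ σ : Fin (Fintype.card V) ≃ V, List.ofFn σ = l := by
  have huniv : l.toFinset = Finset.univ := Finset.eq_univ_iff_forall.mpr (by simp [hm])
  have hlen : l.length = Fintype.card V := by
    rw [← List.toFinset_card_of_nodup hn, huniv, Finset.card_univ]
  have hinj : Function.Injective (fun i : Fin (Fintype.card V) => l.get (Fin.cast hlen.symm i)) := by
    intro a b hab
    have := List.nodup_iff_injective_get.mp hn hab
    exact Fin.ext (by simpa using congrArg Fin.val this)
  have hsurj : Function.Surjective (fun i : Fin (Fintype.card V) => l.get (Fin.cast hlen.symm i)) := by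
    intro x
    obtain ⟨i, hi⟩ := List.mem_iff_get.mp (hm x)
    exact ⟨Fin.cast hlen i, by simpa using hi⟩
  refine ⟨Equiv.ofBijective _ ⟨hinj, hsurj⟩, ?_⟩
  apply List.ext_get (by simp [hlen])
  intro i h1 h2
  simp only [List.get_ofFn]
  rfl

lemma count_eq_lists (E : Set (V × V)) (f : V → ℕ+) :
    redeiBergeCount E f = Nat.card {l : List V // GoodL E f l} := by
  apply Nat.card_eq_of_bijective
    (fun σp : {σ : Fin (Fintype.card V) ≃ V // Friendly E f σ} =>
      (⟨List.ofFn σp.1, (friendly_iff_ofFn E f σp.1).mp σp.2⟩ : {l : List V // GoodL E f l}))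
  constructor
  · rintro ⟨σ1, h1⟩ ⟨σ2, h2⟩ h
    have h' : List.ofFn σ1 = List.ofFn σ2 := congrArg Subtype.val h
    have h'' : (σ1 : Fin (Fintype.card V) → V) = σ2 := List.ofFn_injective h'
    exact Subtype.ext (Equiv.ext (fun i => congrFun h'' i))
  · rintro ⟨l, hnd, hm, hch⟩
    obtain ⟨σ, hσ⟩ := exists_listing l hnd hm
    exact ⟨⟨σ, (friendly_iff_ofFn E f σ).mpr (hσ ▸ ⟨hnd, hm, hch⟩)⟩, Subtype.ext hσ⟩


/-! ### Base case -/

lemma friendly_iff_mono (E : Set (V × V)) (f : V → ℕ+)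
    (hE : ∀ u v : V, (u, v) ∈ E → u ≠ v → f u ≠ f v) (σ : Fin (Fintype.card V) ≃ V) :
    Friendly E f σ ↔ Monotone (fun i => f (σ i)) := by
  constructor
  · exact fun h => h.1
  · intro hm
    refine ⟨hm, fun i h hEe => ?_⟩
    have hle : f (σ i) ≤ f (σ ⟨(i : ℕ) + 1, h⟩) := hm (by simp [Fin.le_def])
    have hne : σ i ≠ σ ⟨(i : ℕ) + 1, h⟩ := by
      intro hc
      have := σ.injective hc
      have : (i : ℕ) = (i : ℕ) + 1 := congrArg Fin.val this
      omega
    exact lt_of_le_of_ne hle (hE _ _ hEe hne)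

lemma count_base (E : Set (V × V)) (f : V → ℕ+)
    (hE : ∀ u v : V, (u, v) ∈ E → u ≠ v → f u ≠ f v) :
    redeiBergeCount E f = Nat.card {π : Perm V // ∀ w, f (π w) = f w} := by
  set n := Fintype.card V
  set g : Fin n ≃ V := (Fintype.equivFin V).symm
  set L₀ : Fin n ≃ V := (Tuple.sort fun i => f (g i)).trans g with hL₀def
  have hL₀ : Monotone fun i => f (L₀ i) := Tuple.monotone_sort fun i => f (g i)
  have key : ∀ σ : Fin n ≃ V, Monotone (fun i => f (σ i)) → ∀ i, f (σ i) = f (L₀ i) := by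
    intro σ hσ i
    set q : Perm (Fin n) := σ.trans L₀.symm with hq
    have hLq : ∀ j, L₀ (q j) = σ j := fun j => L₀.apply_symm_apply (σ j)
    have hmq : Monotone ((fun j => f (L₀ j)) ∘ q) := by
      have : ((fun j => f (L₀ j)) ∘ q) = fun j => f (σ j) := by
        funext j; simp only [Function.comp_apply, hLq]
      rw [this]; exact hσ
    have hm1 : Monotone ((fun j => f (L₀ j)) ∘ ⇑(1 : Perm (Fin n))) := by
      simpa using hL₀
    have := Tuple.unique_monotone hmq hm1
    have h2 := congrFun this i
    simp only [Function.comp_apply, Equiv.Perm.coe_one, id_eq, hLq] at h2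
    exact h2
  apply Nat.card_eq_of_bijective (fun σp : {σ : Fin n ≃ V // Friendly E f σ} =>
    (⟨(L₀.symm.trans σp.1 : V ≃ V), by
      intro x
      have hmono := (friendly_iff_mono E f hE σp.1).mp σp.2
      have := key σp.1 hmono (L₀.symm x)
      simpa using this⟩ : {π : Perm V // ∀ w, f (π w) = f w}))
  constructor
  · rintro ⟨σ1, h1⟩ ⟨σ2, h2⟩ h
    have h' : L₀.symm.trans σ1 = L₀.symm.trans σ2 := congrArg Subtype.val h
    refine Subtype.ext (Equiv.ext fun i => ?_)
    have := congrArg (fun e : V ≃ V => e (L₀ i)) h'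
    simpa using this
  · rintro ⟨π, hπ⟩
    refine ⟨⟨L₀.trans π, ?_⟩, ?_⟩
    · refine (friendly_iff_mono E f hE _).mpr ?_
      have : (fun i => f ((L₀.trans π) i)) = fun i => f (L₀ i) := by
        funext i; simp [hπ (L₀ i)]
      rw [this]; exact hL₀
    · refine Subtype.ext (Equiv.ext fun x => ?_)
      simp

lemma pairSum_base (E : Set (V × V)) (f : V → ℕ+)
    (hE : ∀ u v : V, (u, v) ∈ E → u ≠ v → f u ≠ f v) :
    pairSum E f = Nat.card {π : Perm V // ∀ w, f (π w) = f w} := by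
  classical
  have hcond : ∀ p : Perm V × Perm V,
      PairCond E f p ↔ (p.1 = 1 ∧ ∀ w, f (p.2 w) = f w) := by
    rintro ⟨p1, p2⟩
    constructor
    · rintro ⟨hdisj, h1E, h2E, h1f, h2f⟩
      simp only at *
      refine ⟨Equiv.ext fun w => ?_, h2f⟩
      by_contra hw
      have hne : w ≠ p1 w := fun hc => hw (by rw [← hc]; rfl)
      exact absurd (h1f w).symm (hE w (p1 w) (h1E w (Ne.symm hne)) hne)
    · rintro ⟨h1, h2f⟩
      subst h1
      refine ⟨fun x => Or.inl rfl, fun w hw => absurd rfl hw, ?_, fun w => rfl, h2f⟩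
      intro w hw hEe
      exact hE w (p2 w) hEe (Ne.symm hw) (h2f w).symm
  rw [pairSum]
  have : ∀ p : Perm V × Perm V,
      (if PairCond E f p then ((Perm.sign p.1 : ℤˣ) : ℤ) else 0) =
      (if (p.1 = 1 ∧ ∀ w, f (p.2 w) = f w) then 1 else 0) := by
    intro p
    by_cases h : PairCond E f p
    · rw [if_pos h, if_pos ((hcond p).mp h)]
      rw [((hcond p).mp h).1]
      simp
    · rw [if_neg h, if_neg (fun hc => h ((hcond p).mpr hc))]
  rw [Finset.sum_congr rfl fun p _ => this p]
  rw [Finset.sum_boole]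
  have : Finset.univ.filter (fun p : Perm V × Perm V => p.1 = 1 ∧ ∀ w, f (p.2 w) = f w) =
      {(1 : Perm V)} ×ˢ Finset.univ.filter (fun π : Perm V => ∀ w, f (π w) = f w) := by
    ext ⟨p1, p2⟩
    simp only [Finset.mem_filter, Finset.mem_univ, true_and, Finset.mem_product,
      Finset.mem_singleton]
  rw [this, Finset.card_product]
  simp only [Finset.card_singleton, one_mul]
  rw [Nat.card_eq_fintype_card, Fintype.card_subtype]

lemma base_case (E : Set (V × V)) (f : V → ℕ+)
    (hE : ∀ u v : V, (u, v) ∈ E → u ≠ v → f u ≠ f v) :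
    (redeiBergeCount E f : ℤ) = pairSum E f := by
  rw [count_base E f hE, pairSum_base E f hE]


/-! ### Edge removal: the count side -/

/-- the contracted digraph: `u` plays the role of the merged vertex; its out-edges
come from `v`. -/
def contractE (E : Set (V × V)) (u v : V) : Set ({x : V // x ≠ v} × {x : V // x ≠ v}) :=
  {q | ((if (q.1 : V) = u then v else (q.1 : V)), (q.2 : V)) ∈ E}

/-- pulled-back chain relation of the contracted digraph, on `V` -/
def cRel (E : Set (V × V)) (f : V → ℕ+) (u v : V) (a b : V) : Prop :=
  f a ≤ f b ∧ (((if a = u then v else a), b) ∈ E → f a < f b)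

/-- pulled-back goodness for contracted lists, as lists over `V` avoiding `v` -/
def PP (E : Set (V × V)) (f : V → ℕ+) (u v : V) (l : List V) : Prop :=
  l.Nodup ∧ (∀ x : V, x ≠ v → x ∈ l) ∧ v ∉ l ∧ l.Chain' (cRel E f u v)

lemma chain'_congr_mem {α : Type*} {R S : α → α → Prop} {l : List α}
    (h : ∀ a ∈ l, ∀ b ∈ l, R a b ↔ S a b) : l.Chain' R ↔ l.Chain' S := by
  rw [chain'_iff_get_compat, chain'_iff_get_compat]
  constructor <;> intro hh i hi
  · exact (h _ (l.get_mem _) _ (l.get_mem _)).mp (hh i hi)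
  · exact (h _ (l.get_mem _) _ (l.get_mem _)).mpr (hh i hi)

lemma append_cons_eq_of {α : Type*} {u : α} :
    ∀ {s₁ s₂ t₁ t₂ : List α}, s₁ ++ u :: t₁ = s₂ ++ u :: t₂ → u ∉ s₁ → u ∉ s₂ →
      s₁ = s₂ ∧ t₁ = t₂ := by
  intro s₁
  induction s₁ with
  | nil =>
    intro s₂ t₁ t₂ h h1 h2
    cases s₂ with
    | nil => simpa using h
    | cons b s₂' =>
      exfalso
      simp only [List.nil_append, List.cons_append, List.cons.injEq] at h
      exact h2 (by rw [h.1]; exact List.mem_cons_self)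
  | cons a s₁' ih =>
    intro s₂ t₁ t₂ h h1 h2
    cases s₂ with
    | nil =>
      exfalso
      simp only [List.cons_append, List.nil_append, List.cons.injEq] at h
      exact h1 (by rw [← h.1]; exact List.mem_cons_self)
    | cons b s₂' =>
      simp only [List.cons_append, List.cons.injEq] at h
      have := ih h.2 (fun hc => h1 (List.mem_cons_of_mem _ hc))
        (fun hc => h2 (List.mem_cons_of_mem _ hc))
      exact ⟨by rw [h.1, this.1], this.2⟩

section Removal

variable (E : Set (V × V)) (f : V → ℕ+) (u v : V)

lemma goodE_iff (huv : (u, v) ∈ E) (hfuv : f u = f v) (l : List V) :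
    GoodL E f l ↔ GoodL (E \ {(u, v)}) f l ∧ ¬ ([u, v] <:+: l) := by
  constructor
  · rintro ⟨hnd, hm, hch⟩
    refine ⟨⟨hnd, hm, hch.imp fun {a b} hab => ⟨hab.1, fun hE => hab.2 hE.1⟩⟩, ?_⟩
    intro hinf
    have := (hch.infix hinf)
    rw [List.isChain_pair] at this
    have hlt := this.2 huv
    rw [hfuv] at hlt
    exact lt_irrefl _ hlt
  · rintro ⟨⟨hnd, hm, hch⟩, hninf⟩
    refine ⟨hnd, hm, ?_⟩
    rw [chain'_iff_get_compat] at hch ⊢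
    intro i hi
    refine ⟨(hch i hi).1, fun hE => ?_⟩
    by_cases hcase : l.get ⟨i, by omega⟩ = u ∧ l.get ⟨i + 1, by omega⟩ = v
    · exfalso
      apply hninf
      refine ⟨l.take i, l.drop (i + 2), ?_⟩
      have e1 : l.drop i = l.get ⟨i, by omega⟩ :: l.drop (i + 1) :=
        List.drop_eq_getElem_cons (by omega)
      have e2 : l.drop (i+1) = l.get ⟨i+1, by omega⟩ :: l.drop (i + 2) :=
        List.drop_eq_getElem_cons (by omega)
      rw [← hcase.1, ← hcase.2]
      calc l.take i ++ [l.get ⟨i, by omega⟩, l.get ⟨i+1, by omega⟩] ++ l.drop (i+2)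
          = l.take i ++ l.drop i := by rw [e1, e2]; simp
        _ = l := List.take_append_drop i l
    · exact (hch i hi).2 ⟨hE, by simpa [Prod.ext_iff] using hcase⟩

end Removal

lemma length_of_nodup_complete {l : List V} (hnd : l.Nodup) (hm : ∀ x : V, x ∈ l) :
    l.length = Fintype.card V := by
  have huniv : l.toFinset = Finset.univ := Finset.eq_univ_iff_forall.mpr (by simp [hm])
  rw [← List.toFinset_card_of_nodup hnd, huniv, Finset.card_univ]

lemma finite_goodL (E' : Set (V × V)) (f' : V → ℕ+) :
    Finite {l : List V // GoodL E' f' l} := by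
  apply Finite.of_injective (fun lp : {l : List V // GoodL E' f' l} =>
    (fun i : Fin (Fintype.card V) => lp.val.get
      ⟨i, by rw [length_of_nodup_complete lp.2.1 lp.2.2.1]; exact i.isLt⟩))
  rintro ⟨l₁, h₁⟩ ⟨l₂, h₂⟩ h
  have hl₁ : l₁.length = Fintype.card V := length_of_nodup_complete h₁.1 h₁.2.1
  have hl₂ : l₂.length = Fintype.card V := length_of_nodup_complete h₂.1 h₂.2.1
  refine Subtype.ext (List.ext_get (by rw [hl₁, hl₂]) ?_)
  intro i hi1 hi2
  have := congrFun h ⟨i, by rw [← hl₁]; exact hi1⟩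
  simpa using this




section Removal

variable (E : Set (V × V)) (f : V → ℕ+) (u v : V)

open Classical in
lemma card_split (huv : (u, v) ∈ E) (hfuv : f u = f v) :
    Nat.card {l : List V // GoodL (E \ {(u, v)}) f l} =
      Nat.card {l : List V // GoodL E f l} +
      Nat.card {l : List V // GoodL (E \ {(u, v)}) f l ∧ [u, v] <:+: l} := by
  classical
  have hfin : Finite {l : List V // GoodL (E \ {(u, v)}) f l} := finite_goodL _ _
  have e0 : {l : List V // GoodL (E \ {(u, v)}) f l} ≃
      {x : {l : List V // GoodL (E \ {(u, v)}) f l} // ¬ ([u, v] <:+: x.val)} ⊕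
      {x : {l : List V // GoodL (E \ {(u, v)}) f l} // ¬ ¬ ([u, v] <:+: x.val)} :=
    (Equiv.sumCompl _).symm
  have e1 : {x : {l : List V // GoodL (E \ {(u, v)}) f l} // ¬ ([u, v] <:+: x.val)} ≃
      {l : List V // GoodL E f l} :=
    (Equiv.subtypeSubtypeEquivSubtypeInter (GoodL (E \ {(u, v)}) f)
      (fun l => ¬ ([u, v] <:+: l))).trans
      (Equiv.subtypeEquivRight fun l => (goodE_iff E f u v huv hfuv l).symm)
  have e2 : {x : {l : List V // GoodL (E \ {(u, v)}) f l} // ¬ ¬ ([u, v] <:+: x.val)} ≃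
      {l : List V // GoodL (E \ {(u, v)}) f l ∧ [u, v] <:+: l} :=
    (Equiv.subtypeSubtypeEquivSubtypeInter (GoodL (E \ {(u, v)}) f)
      (fun l => ¬ ¬ ([u, v] <:+: l))).trans
      (Equiv.subtypeEquivRight fun l => by tauto)
  rw [Nat.card_congr e0, Nat.card_sum, Nat.card_congr e1, Nat.card_congr e2]

end Removal


section Surgery

variable {E : Set (V × V)} {f : V → ℕ+} {u v : V}

lemma chainRel_eq_cRel {F : Set (V × V)} {a b : V} (ha : a ≠ u) :
    chainRel F f a b ↔ cRel F f u v a b := by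
  unfold chainRel cRel
  rw [if_neg ha]

lemma chain_translate (F : Set (V × V)) (hF : (u, v) ∉ F) (hfuv : f u = f v)
    {s t : List V} (hus : u ∉ s) (hut : u ∉ t) :
    (s ++ u :: v :: t).Chain' (chainRel F f) ↔ (s ++ u :: t).Chain' (cRel F f u v) := by
  unfold List.Chain'
  rw [List.isChain_append, List.isChain_append, List.isChain_cons_cons, List.isChain_cons,
    List.isChain_cons]
  have hs : (s.Chain' (chainRel F f)) ↔ s.Chain' (cRel F f u v) :=
    chain'_congr_mem fun a ha b _ => chainRel_eq_cRel (fun h => hus (h ▸ ha))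
  have ht : (t.Chain' (chainRel F f)) ↔ t.Chain' (cRel F f u v) :=
    chain'_congr_mem fun a ha b _ => chainRel_eq_cRel (fun h => hut (h ▸ ha))
  have hjunc : (∀ x ∈ s.getLast?, ∀ y ∈ (u :: v :: t).head?, chainRel F f x y) ↔
      (∀ x ∈ s.getLast?, ∀ y ∈ (u :: t).head?, cRel F f u v x y) := by
    simp only [List.head?_cons, Option.mem_def, Option.some.injEq]
    constructor
    · intro h x hx y hy
      rw [← hy]
      exact (chainRel_eq_cRel (a := x) (fun hh =>
        hus (by rw [← hh]; exact List.mem_of_mem_getLast? hx))).mp (h x hx u rfl)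
    · intro h x hx y hy
      rw [← hy]
      exact (chainRel_eq_cRel (a := x) (fun hh =>
        hus (by rw [← hh]; exact List.mem_of_mem_getLast? hx))).mpr (h x hx u rfl)
  have hmidv : chainRel F f u v := ⟨le_of_eq hfuv, fun h => absurd h hF⟩
  have hvy : (∀ y ∈ t.head?, chainRel F f v y) ↔ (∀ y ∈ t.head?, cRel F f u v u y) := by
    constructor <;> intro h y hy
    · have h' := h y hy
      show f u ≤ f y ∧ ((if u = u then v else u, y) ∈ F → f u < f y)
      rw [if_pos rfl, hfuv]
      exact h'
    · have h' : f u ≤ f y ∧ ((if u = u then v else u, y) ∈ F → f u < f y) := h y hy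
      rw [if_pos rfl, hfuv] at h'
      exact h'
  constructor
  · rintro ⟨h1, ⟨h2, h3, h4⟩, h5⟩
    exact ⟨hs.mp h1, ⟨hvy.mp h3, ht.mp h4⟩, hjunc.mp h5⟩
  · rintro ⟨h1, ⟨h3, h4⟩, h5⟩
    exact ⟨hs.mpr h1, ⟨hmidv, hvy.mpr h3, ht.mpr h4⟩, hjunc.mpr h5⟩

lemma erase_insert_eq {s t : List V} (hvs : v ∉ s) (hvu : u ≠ v) :
    (s ++ u :: v :: t).erase v = s ++ u :: t := by
  rw [List.erase_append_right _ hvs]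
  congr 1
  rw [List.erase_cons_tail (by simp [hvu]), List.erase_cons_head]

lemma nodup_facts {s t : List V} (h : (s ++ u :: v :: t).Nodup) :
    u ∉ s ∧ v ∉ s ∧ u ∉ t ∧ v ∉ t ∧ u ≠ v := by
  rw [List.nodup_append] at h
  obtain ⟨-, h2, h3⟩ := h
  rw [List.nodup_cons] at h2
  obtain ⟨hu, h2⟩ := h2
  rw [List.nodup_cons] at h2
  refine ⟨fun hc => h3 u hc u List.mem_cons_self rfl, fun hc => h3 v hc v ?_ rfl, ?_, h2.1, ?_⟩
  · exact List.mem_cons_of_mem _ (List.mem_cons_self)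
  · exact fun hc => hu (List.mem_cons_of_mem _ hc)
  · exact fun hc => hu (hc ▸ List.mem_cons_self)

lemma nodup_facts' {s t : List V} (h : (s ++ u :: t).Nodup) :
    u ∉ s ∧ u ∉ t := by
  rw [List.nodup_append] at h
  obtain ⟨-, h2, h3⟩ := h
  rw [List.nodup_cons] at h2
  exact ⟨fun hc => h3 u hc u List.mem_cons_self rfl, h2.1⟩

open Classical in
lemma card_bad_eq_PP (huv : (u, v) ∈ E) (hne : u ≠ v) (hfuv : f u = f v) :
    Nat.card {l : List V // GoodL (E \ {(u, v)}) f l ∧ [u, v] <:+: l} =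
      Nat.card {l : List V // PP (E \ {(u, v)}) f u v l} := by
  have hF : (u, v) ∉ E \ {(u, v)} := by simp
  have fwd : ∀ l : List V, GoodL (E \ {(u, v)}) f l → [u, v] <:+: l →
      PP (E \ {(u, v)}) f u v (l.erase v) := by
    rintro l ⟨hnd, hm, hch⟩ ⟨s, t, hst⟩
    have hl : l = s ++ u :: v :: t := by rw [← hst]; simp
    have hfacts := nodup_facts (hl ▸ hnd)
    have heq : l.erase v = s ++ u :: t := by rw [hl]; exact erase_insert_eq hfacts.2.1 hne
    refine ⟨hnd.erase v, ?_, ?_, ?_⟩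
    · intro x hx
      exact (List.Nodup.mem_erase_iff hnd).mpr ⟨hx, hm x⟩
    · intro hc
      exact ((List.Nodup.mem_erase_iff hnd).mp hc).1 rfl
    · rw [heq]
      exact (chain_translate _ hF hfuv hfacts.1 hfacts.2.2.1).mp (hl ▸ hch)
  apply Nat.card_eq_of_bijective
    (fun lp : {l : List V // GoodL (E \ {(u, v)}) f l ∧ [u, v] <:+: l} =>
      (⟨lp.val.erase v, fwd lp.val lp.2.1 lp.2.2⟩ : {l : List V // PP (E \ {(u, v)}) f u v l}))
  constructor
  · rintro ⟨l₁, hg₁, s₁, t₁, hst₁⟩ ⟨l₂, hg₂, s₂, t₂, hst₂⟩ h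
    have h' : l₁.erase v = l₂.erase v := congrArg Subtype.val h
    have hl₁ : l₁ = s₁ ++ u :: v :: t₁ := by rw [← hst₁]; simp
    have hl₂ : l₂ = s₂ ++ u :: v :: t₂ := by rw [← hst₂]; simp
    have hf₁ := nodup_facts (hl₁ ▸ hg₁.1)
    have hf₂ := nodup_facts (hl₂ ▸ hg₂.1)
    rw [hl₁, hl₂, erase_insert_eq hf₁.2.1 hne, erase_insert_eq hf₂.2.1 hne] at h'
    obtain ⟨hss, htt⟩ := append_cons_eq_of h' hf₁.1 hf₂.1
    apply Subtype.ext
    show l₁ = l₂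
    rw [hl₁, hl₂, hss, htt]
  · rintro ⟨m, hnd, hm, hv, hch⟩
    obtain ⟨s, t, hl'⟩ := List.append_of_mem (hm u hne)
    have hf' := nodup_facts' (hl' ▸ hnd)
    have hvs : v ∉ s := fun hc => hv (hl' ▸ List.mem_append_left _ hc)
    have hvt : v ∉ t := fun hc => hv (hl' ▸ List.mem_append_right _ (List.mem_cons_of_mem _ hc))
    have hGood : GoodL (E \ {(u, v)}) f (s ++ u :: v :: t) := by
      refine ⟨?_, ?_, ?_⟩
      · have e1 : s ++ u :: v :: t = (s ++ [u]) ++ v :: t := by simp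
        rw [e1, List.nodup_middle, List.nodup_cons]
        constructor
        · intro hc
          rcases List.mem_append.mp hc with hc | hc
          · rcases List.mem_append.mp hc with hc | hc
            · exact hvs hc
            · exact hne (List.mem_singleton.mp hc).symm
          · exact hvt hc
        · have e2 : s ++ [u] ++ t = s ++ u :: t := by simp
          rw [e2]
          exact hl' ▸ hnd
      · intro x
        by_cases hx : x = v
        · subst hx
          exact List.mem_append_right _ (List.mem_cons_of_mem _ (List.mem_cons_self))
        · have := hl' ▸ hm x hx
          rcases List.mem_append.mp this with hc | hc
          · exact List.mem_append_left _ hc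
          · rcases List.mem_cons.mp hc with hc | hc
            · exact List.mem_append_right _ (hc ▸ List.mem_cons_self)
            · exact List.mem_append_right _
                (List.mem_cons_of_mem _ (List.mem_cons_of_mem _ hc))
      · exact (chain_translate _ hF hfuv hf'.1 hf'.2).mpr (hl' ▸ hch)
    refine ⟨⟨s ++ u :: v :: t, hGood, ⟨s, t, by simp⟩⟩, ?_⟩
    refine Subtype.ext ?_
    show (s ++ u :: v :: t).erase v = m
    rw [erase_insert_eq hvs hne, ← hl']

open Classical in
lemma card_contract_eq_PP (E : Set (V × V)) (f : V → ℕ+) (u v : V) :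
    Nat.card {m : List {x : V // x ≠ v} //
        GoodL (contractE E u v) (fun x => f x.val) m} =
      Nat.card {l : List V // PP E f u v l} := by
  have fwd : ∀ m : List {x : V // x ≠ v}, GoodL (contractE E u v) (fun x => f x.val) m →
      PP E f u v (m.map Subtype.val) := by
    rintro m ⟨hnd, hm, hch⟩
    refine ⟨hnd.map Subtype.val_injective, ?_, ?_, ?_⟩
    · intro x hx
      exact List.mem_map_of_mem (hm ⟨x, hx⟩)
    · intro hc
      obtain ⟨a, -, ha⟩ := List.mem_map.mp hc
      exact a.2 ha
    · unfold List.Chain'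
      rw [List.isChain_map]
      exact hch.imp fun {a b} hab => ⟨hab.1, hab.2⟩
  apply Nat.card_eq_of_bijective
    (fun mp : {m : List {x : V // x ≠ v} // GoodL (contractE E u v) (fun x => f x.val) m} =>
      (⟨mp.val.map Subtype.val, fwd mp.val mp.2⟩ : {l : List V // PP E f u v l}))
  constructor
  · rintro ⟨m₁, h₁⟩ ⟨m₂, h₂⟩ h
    exact Subtype.ext (List.map_injective_iff.mpr Subtype.val_injective
      (congrArg Subtype.val h))
  · rintro ⟨l, hnd, hm, hv, hch⟩
    have hall : ∀ a ∈ l, a ≠ v := fun a ha hav => hv (hav ▸ ha)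
    refine ⟨⟨l.pmap (fun a h => (⟨a, h⟩ : {x : V // x ≠ v})) hall, ?_, ?_, ?_⟩, ?_⟩
    · exact hnd.pmap (fun a _ b _ hab => congrArg Subtype.val hab)
    · intro x
      rw [List.mem_pmap]
      exact ⟨x.val, hm x.val x.2, Subtype.ext rfl⟩
    · have hmap : (l.pmap (fun a h => (⟨a, h⟩ : {x : V // x ≠ v})) hall).map Subtype.val
          = l := by
        rw [List.map_pmap]
        exact List.pmap_eq_map _ ▸ l.map_id
      have : ((l.pmap (fun a h => (⟨a, h⟩ : {x : V // x ≠ v})) hall).map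
          Subtype.val).Chain' (cRel E f u v) := by rw [hmap]; exact hch
      unfold List.Chain' at this
      rw [List.isChain_map] at this
      exact this.imp fun {a b} hab => ⟨hab.1, hab.2⟩
    · refine Subtype.ext ?_
      show (l.pmap _ hall).map Subtype.val = l
      rw [List.map_pmap]
      exact List.pmap_eq_map _ ▸ l.map_id

end Surgery

lemma remN (E : Set (V × V)) (f : V → ℕ+) (u v : V)
    (huv : (u, v) ∈ E) (hne : u ≠ v) (hfuv : f u = f v) :
    redeiBergeCount (E \ {(u, v)}) f = redeiBergeCount E f +
      redeiBergeCount (contractE (E \ {(u, v)}) u v) (fun x => f x.val) := by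
  rw [count_eq_lists, count_eq_lists, count_eq_lists]
  rw [card_split E f u v huv hfuv, card_bad_eq_PP huv hne hfuv,
    card_contract_eq_PP (E \ {(u, v)}) f u v]


/-! ### Edge removal: the signed pair sum side -/

section PairSurgery

variable {u v : V}

lemma ofSubtype_fix_v (τ : Perm {x : V // x ≠ v}) : Perm.ofSubtype τ v = v :=
  Perm.ofSubtype_apply_of_not_mem τ (by simp)

lemma ofSubtype_apply_ne (τ : Perm {x : V // x ≠ v}) {x : V} (hx : x ≠ v) :
    Perm.ofSubtype τ x = (τ ⟨x, hx⟩).val :=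
  Perm.ofSubtype_apply_of_mem τ hx

lemma ofSubtype_ne_v (τ : Perm {x : V // x ≠ v}) {x : V} (hx : x ≠ v) :
    Perm.ofSubtype τ x ≠ v := by
  rw [ofSubtype_apply_ne τ hx]
  exact (τ ⟨x, hx⟩).2

lemma fix_iff_of_fix {g : Perm V} (hg : g v = v) :
    ∀ x : V, (fun y : V => y ≠ v) (g x) ↔ (fun y : V => y ≠ v) x := by
  intro x
  constructor
  · intro hgx hx
    exact hgx (hx ▸ hg)
  · intro hx hgx
    exact hx (g.injective (hgx.trans hg.symm))

lemma subtypePerm_moves {g : Perm V} (hg : g v = v) {x : V} (hx : x ≠ v) :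
    (g.subtypePerm (p := fun y : V => y ≠ v) (fix_iff_of_fix hg)) ⟨x, hx⟩ = ⟨g x, (fix_iff_of_fix hg x).mpr hx⟩ := rfl

open Classical in
lemma pairSum_surgery (E : Set (V × V)) (f : V → ℕ+)
    (huv : (u, v) ∈ E) (hne : u ≠ v) (hfuv : f u = f v) :
    pairSum (E \ {(u, v)}) f = pairSum E f +
      pairSum (contractE (E \ {(u, v)}) u v) (fun x => f x.val) := by
  classical
  set E₂ : Set (V × V) := E \ {(u, v)} with hE₂def
  have hvE₂ : (u, v) ∉ E₂ := by simp [hE₂def]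
  have hE₂E : E₂ ⊆ E := Set.diff_subset
  have hmem_iff : ∀ a b : V, ¬(a = u ∧ b = v) → ((a, b) ∈ E₂ ↔ (a, b) ∈ E) := by
    intro a b ha
    simp only [hE₂def, Set.mem_diff, Set.mem_singleton_iff, Prod.mk.injEq]
    tauto
  set u' : {x : V // x ≠ v} := ⟨u, hne⟩ with hu'def
  set E'' : Set ({x : V // x ≠ v} × {x : V // x ≠ v}) := contractE E₂ u v with hE''def
  set f'' : {x : V // x ≠ v} → ℕ+ := fun x => f x.val with hf''def
  have hE''mem : ∀ (a b : {x : V // x ≠ v}),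
      ((a, b) ∈ E'' ↔ ((if (a : V) = u then v else (a : V)), (b : V)) ∈ E₂) := by
    intro a b; rfl
  -- Case split predicate for contracted pairs
  set CI : Perm {x : V // x ≠ v} × Perm {x : V // x ≠ v} → Prop :=
    fun q => q.1 u' ≠ u' ∨ (q.2 u' = u' ∧ (v, u) ∈ E₂) with hCIdef
  -- Step 1: pointwise identity for the removal
  have key : ∀ p : Perm V × Perm V,
      (if PairCond E₂ f p then ((Perm.sign p.1 : ℤˣ) : ℤ) else 0) =
      (if PairCond E f p then ((Perm.sign p.1 : ℤˣ) : ℤ) else 0)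
      - (if PairCond E f p ∧ p.1 u = v then ((Perm.sign p.1 : ℤˣ) : ℤ) else 0)
      + (if PairCond E₂ f p ∧ p.2 u = v then ((Perm.sign p.1 : ℤˣ) : ℤ) else 0) := by
    rintro ⟨p1, p2⟩
    by_cases hE : PairCond E f (p1, p2) <;> by_cases h2 : PairCond E₂ f (p1, p2)
    · have hn1 : ¬ (p1 u = v) := by
        intro hc
        have := h2.2.1 u (by rw [hc]; exact Ne.symm hne)
        rw [hc] at this
        exact hvE₂ this
      have hn2 : ¬ (p2 u = v) := by
        intro hc
        have := hE.2.2.1 u (by rw [hc]; exact Ne.symm hne)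
        rw [hc] at this
        exact this huv
      rw [if_pos h2, if_pos hE, if_neg (fun hc => hn1 hc.2), if_neg (fun hc => hn2 hc.2)]
      ring
    · have h1v : p1 u = v := by
        by_contra hc
        apply h2
        obtain ⟨hd, hA, hB, hf1, hf2⟩ := hE
        refine ⟨hd, ?_, ?_, hf1, hf2⟩
        · intro w hw
          simp only at hw ⊢
          rw [hmem_iff w (p1 w) (fun hc' => hc (hc'.1 ▸ hc'.2))]
          exact hA w hw
        · intro w hw
          exact fun hc' => hB w hw (hE₂E hc')
      rw [if_neg h2, if_pos hE, if_pos ⟨hE, h1v⟩, if_neg (fun hc => h2 hc.1)]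
      ring
    · have h2v : p2 u = v := by
        by_contra hc
        apply hE
        obtain ⟨hd, hA, hB, hf1, hf2⟩ := h2
        refine ⟨hd, fun w hw => hE₂E (hA w hw), ?_, hf1, hf2⟩
        intro w hw hcE
        exact hB w hw ((hmem_iff w (p2 w) (fun hc' => hc (hc'.1 ▸ hc'.2))).mpr hcE)
      rw [if_pos h2, if_neg hE, if_neg (fun hc => hE hc.1), if_pos ⟨h2, h2v⟩]
      ring
    · rw [if_neg h2, if_neg hE, if_neg (fun hc => hE hc.1), if_neg (fun hc => h2 hc.1)]
      ring
  have hswap_u : Equiv.swap u v u = v := Equiv.swap_apply_left u v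
  have hswap_v : Equiv.swap u v v = u := Equiv.swap_apply_right u v
  have hswap_ne : ∀ x : V, x ≠ u → x ≠ v → Equiv.swap u v x = x :=
    fun x h1 h2 => Equiv.swap_apply_of_ne_of_ne h1 h2
  have hB : (∑ p : Perm V × Perm V,
        if PairCond E f p ∧ p.1 u = v then ((Perm.sign p.1 : ℤˣ) : ℤ) else 0) =
      ∑ q : Perm {x : V // x ≠ v} × Perm {x : V // x ≠ v},
        if PairCond E'' f'' q ∧ CI q then -((Perm.sign q.1 : ℤˣ) : ℤ) else 0 := by
    rw [← Finset.sum_filter, ← Finset.sum_filter]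
    have j1fix : ∀ p : Perm V × Perm V,
        p ∈ Finset.univ.filter (fun p : Perm V × Perm V => PairCond E f p ∧ p.1 u = v) →
        (p.1 * Equiv.swap u v) v = v := by
      intro p hp
      rw [Perm.mul_apply, hswap_v]
      exact (Finset.mem_filter.mp hp).2.2
    have j2fix : ∀ p : Perm V × Perm V,
        p ∈ Finset.univ.filter (fun p : Perm V × Perm V => PairCond E f p ∧ p.1 u = v) →
        p.2 v = v := by
      intro p hp
      obtain ⟨-, hcond, h1uv⟩ := Finset.mem_filter.mp hp
      rcases hcond.1 v with h | h
      · exact absurd (p.1.injective (h1uv.trans h.symm)) hne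
      · exact h
    have expandI_mem : ∀ q : Perm {x : V // x ≠ v} × Perm {x : V // x ≠ v},
        PairCond E'' f'' q → CI q →
        PairCond E f (Perm.ofSubtype q.1 * Equiv.swap u v, Perm.ofSubtype q.2) ∧
          (Perm.ofSubtype q.1 * Equiv.swap u v) u = v := by
      rintro ⟨q1, q2⟩ ⟨hd, hq1, hq2, hqf1, hqf2⟩ hCI
      simp only at hd hq1 hq2 hqf1 hqf2
      have hσ₁u : (Perm.ofSubtype q1 * Equiv.swap u v) u = v := by
        rw [Perm.mul_apply, hswap_u, ofSubtype_fix_v]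
      have hq2u : q2 u' = u' := by
        rcases hCI with hmove | ⟨hfix2, -⟩
        · rcases hd u' with h | h
          · exact absurd h hmove
          · exact h
        · exact hfix2
      refine ⟨⟨?_, ?_, ?_, ?_, ?_⟩, hσ₁u⟩
      · -- disjoint
        intro x
        by_cases hxv : x = v
        · rw [hxv]
          exact Or.inr (ofSubtype_fix_v q2)
        by_cases hxu : x = u
        · rw [hxu]
          refine Or.inr ?_
          rw [ofSubtype_apply_ne q2 hne]
          exact congrArg Subtype.val hq2u
        · rcases hd ⟨x, hxv⟩ with h | h
          · refine Or.inl ?_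
            rw [Perm.mul_apply, hswap_ne x hxu hxv, ofSubtype_apply_ne q1 hxv, h]
          · refine Or.inr ?_
            rw [ofSubtype_apply_ne q2 hxv, h]
      · -- σ₁ E-condition
        intro w hw
        simp only at hw ⊢
        by_cases hwu : w = u
        · rw [hwu] at hw ⊢
          rw [hσ₁u]
          exact huv
        by_cases hwv : w = v
        · rw [hwv] at hw ⊢
          rw [Perm.mul_apply, hswap_v, ofSubtype_apply_ne q1 hne] at hw ⊢
          by_cases hmv : q1 ⟨u, hne⟩ = ⟨u, hne⟩
          · rcases hCI with hmove | ⟨-, hvu⟩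
            · exact absurd (show q1 u' = u' from hmv) hmove
            · rw [hmv]
              exact hE₂E hvu
          · have h5 := hq1 ⟨u, hne⟩ hmv
            rw [hE''mem] at h5
            have h6 : ((if u = u then v else u : V), ((q1 ⟨u, hne⟩ : { x : V // x ≠ v }) : V)) ∈ E₂ := h5
            rw [if_pos rfl] at h6
            exact hE₂E h6
        · rw [Perm.mul_apply, hswap_ne w hwu hwv, ofSubtype_apply_ne q1 hwv] at hw ⊢
          have hmv : q1 ⟨w, hwv⟩ ≠ ⟨w, hwv⟩ := fun hc => hw (by rw [hc])
          have h5 := hq1 _ hmv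
          rw [hE''mem] at h5
          have h6 : ((if w = u then v else w : V), ((q1 ⟨w, hwv⟩ : { x : V // x ≠ v }) : V)) ∈ E₂ := h5
          rw [if_neg hwu] at h6
          exact hE₂E h6
      · -- σ₂ non-E-condition
        intro w hw
        simp only at hw ⊢
        by_cases hwv : w = v
        · rw [hwv] at hw ⊢
          exact absurd (ofSubtype_fix_v q2) hw
        by_cases hwu : w = u
        · rw [hwu] at hw ⊢
          rw [ofSubtype_apply_ne q2 hne] at hw
          exact absurd (congrArg Subtype.val hq2u) hw
        · rw [ofSubtype_apply_ne q2 hwv] at hw ⊢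
          have hmv : q2 ⟨w, hwv⟩ ≠ ⟨w, hwv⟩ := fun hc => hw (by rw [hc])
          have h2 := hq2 _ hmv
          rw [hE''mem] at h2
          have h3 : ¬ ((if w = u then v else w : V), ((q2 ⟨w, hwv⟩ : { x : V // x ≠ v }) : V)) ∈ E₂ := h2
          rw [if_neg hwu] at h3
          intro hcE
          exact h3 ((hmem_iff w _ (fun hc' => hwu hc'.1)).mpr hcE)
      · -- f-condition σ₁
        intro w
        simp only
        by_cases hwu : w = u
        · rw [hwu]
          rw [hσ₁u, hfuv]
        by_cases hwv : w = v
        · rw [hwv]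
          rw [Perm.mul_apply, hswap_v, ofSubtype_apply_ne q1 hne]
          have := hqf1 u'
          simp only [hf''def] at this
          rw [hu'def] at this
          exact this.trans hfuv
        · rw [Perm.mul_apply, hswap_ne w hwu hwv, ofSubtype_apply_ne q1 hwv]
          exact hqf1 ⟨w, hwv⟩
      · -- f-condition σ₂
        intro w
        simp only
        by_cases hwv : w = v
        · rw [hwv]
          rw [ofSubtype_fix_v]
        · rw [ofSubtype_apply_ne q2 hwv]
          exact hqf2 ⟨w, hwv⟩
    refine (Finset.sum_bij'
      (fun (q : Perm {x : V // x ≠ v} × Perm {x : V // x ≠ v}) (hq : q ∈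
          Finset.univ.filter (fun q => PairCond E'' f'' q ∧ CI q)) =>
        ((Perm.ofSubtype q.1 * Equiv.swap u v, Perm.ofSubtype q.2) : Perm V × Perm V))
      (fun (p : Perm V × Perm V) (hp : p ∈ Finset.univ.filter
          (fun p : Perm V × Perm V => PairCond E f p ∧ p.1 u = v)) =>
        ((p.1 * Equiv.swap u v).subtypePerm (fix_iff_of_fix (j1fix p hp)),
          p.2.subtypePerm (fix_iff_of_fix (j2fix p hp))))
      ?_ ?_ ?_ ?_ ?_).symm
    · -- maps into
      intro q hq
      obtain ⟨-, hq'⟩ := Finset.mem_filter.mp hq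
      rw [Finset.mem_filter]
      exact ⟨Finset.mem_univ _, (expandI_mem q hq'.1 hq'.2).1, (expandI_mem q hq'.1 hq'.2).2⟩
    · -- contraction into
      intro p hp
      obtain ⟨-, hcond, h1uv⟩ := Finset.mem_filter.mp hp
      obtain ⟨hd, hp1, hp2, hpf1, hpf2⟩ := hcond
      have h2v : p.2 v = v := j2fix p hp
      have h1vne : p.1 v ≠ v := fun h => absurd (p.1.injective (h1uv.trans h.symm)) hne
      have h2u : p.2 u = u := by
        rcases hd u with h | h
        · exact absurd h (by rw [h1uv]; exact Ne.symm hne)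
        · exact h
      rw [Finset.mem_filter]
      refine ⟨Finset.mem_univ _, ⟨?_, ?_, ?_, ?_, ?_⟩, ?_⟩
      · -- disjoint
        rintro ⟨x, hxv⟩
        by_cases hxu : x = u
        · refine Or.inr (Subtype.ext ?_)
          show p.2 x = x
          rw [hxu]
          exact h2u
        · rcases hd x with h | h
          · refine Or.inl (Subtype.ext ?_)
            rw [subtypePerm_moves (j1fix p hp)]
            simp only [Perm.mul_apply, hswap_ne x hxu hxv]
            exact h
          · exact Or.inr (Subtype.ext h)
      · -- q1 E''-cond
        rintro ⟨x, hxv⟩ hx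
        rw [hE''mem]
        show ((if x = u then v else x : V), p.1 (Equiv.swap u v x)) ∈ E₂
        by_cases hxu : x = u
        · rw [hxu]
          rw [if_pos rfl, hswap_u]
          rw [hmem_iff v (p.1 v) (fun hc' => hne hc'.1.symm)]
          exact hp1 v h1vne
        · rw [if_neg hxu, hswap_ne x hxu hxv]
          have hmv : p.1 x ≠ x := by
            intro hc
            apply hx
            refine Subtype.ext ?_
            show (p.1 * Equiv.swap u v) x = x
            rw [Perm.mul_apply, hswap_ne x hxu hxv]
            exact hc
          rw [hmem_iff x (p.1 x) (fun hc' => hxu hc'.1)]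
          exact hp1 x hmv
      · -- q2 non-E''-cond
        rintro ⟨x, hxv⟩ hx
        rw [hE''mem]
        show ¬ ((if x = u then v else x : V), p.2 x) ∈ E₂
        have hxu : x ≠ u := by
          intro hc
          apply hx
          refine Subtype.ext ?_
          show p.2 x = x
          rw [hc]
          exact h2u
        rw [if_neg hxu]
        intro hcE₂
        have hmv : p.2 x ≠ x := by
          intro hc
          exact hx (Subtype.ext (by exact hc))
        exact hp2 x hmv (hE₂E hcE₂)
      · -- f q1
        rintro ⟨x, hxv⟩
        show f (p.1 (Equiv.swap u v x)) = f x
        by_cases hxu : x = u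
        · rw [hxu]
          rw [hswap_u]
          exact (hpf1 v).trans hfuv.symm
        · rw [hswap_ne x hxu hxv]
          exact hpf1 x
      · -- f q2
        rintro ⟨x, hxv⟩
        show f (p.2 x) = f x
        exact hpf2 x
      · -- CI
        by_cases h1v : p.1 v = u
        · refine Or.inr ⟨Subtype.ext ?_, ?_⟩
          · show p.2 u = u
            exact h2u
          · rw [← h1v]
            rw [hmem_iff v (p.1 v) (fun hc' => hne hc'.1.symm)]
            exact hp1 v h1vne
        · refine Or.inl ?_
          intro hc
          apply h1v
          have h7 := congrArg Subtype.val hc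
          have h8 : (p.1 * Equiv.swap u v) u = u := h7
          rw [Perm.mul_apply, hswap_u] at h8
          exact h8
    · -- left inverse (q side)
      intro q hq
      refine Prod.ext ?_ ?_
      · refine Equiv.ext fun x => Subtype.ext ?_
        show ((Perm.ofSubtype q.1 * Equiv.swap u v) * Equiv.swap u v) (x : V) = ((q.1 x : { x : V // x ≠ v }) : V)
        rw [mul_assoc, Equiv.swap_mul_self, mul_one]
        rw [ofSubtype_apply_ne q.1 x.2]
      · refine Equiv.ext fun x => Subtype.ext ?_
        show Perm.ofSubtype q.2 (x : V) = ((q.2 x : { x : V // x ≠ v }) : V)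
        rw [ofSubtype_apply_ne q.2 x.2]
    · -- right inverse (p side)
      intro p hp
      have h9 : Perm.ofSubtype ((p.1 * Equiv.swap u v).subtypePerm
          (p := fun y : V => y ≠ v) (fix_iff_of_fix (j1fix p hp))) = p.1 * Equiv.swap u v :=
        Perm.ofSubtype_subtypePerm _ (fun x hx hxv => hx (by rw [hxv]; exact j1fix p hp))
      have h10 : Perm.ofSubtype (p.2.subtypePerm (p := fun y : V => y ≠ v) (fix_iff_of_fix (j2fix p hp))) = p.2 :=
        Perm.ofSubtype_subtypePerm _ (fun x hx hxv => hx (by rw [hxv]; exact j2fix p hp))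
      refine Prod.ext ?_ ?_
      · show Perm.ofSubtype ((p.1 * Equiv.swap u v).subtypePerm
          (fix_iff_of_fix (j1fix p hp))) * Equiv.swap u v = p.1
        rw [h9, mul_assoc, Equiv.swap_mul_self, mul_one]
      · exact h10
    · -- weights
      intro q hq
      have : Perm.sign ((Perm.ofSubtype q.1 * Equiv.swap u v)) =
          Perm.sign q.1 * (-1) := by
        rw [Perm.sign_mul, Perm.sign_swap hne, Perm.sign_ofSubtype]
      rw [this]
      push_cast
      ring
  have hA : (∑ p : Perm V × Perm V,
        if PairCond E₂ f p ∧ p.2 u = v then ((Perm.sign p.1 : ℤˣ) : ℤ) else 0) =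
      ∑ q : Perm {x : V // x ≠ v} × Perm {x : V // x ≠ v},
        if PairCond E'' f'' q ∧ ¬ CI q then ((Perm.sign q.1 : ℤˣ) : ℤ) else 0 := by
    rw [← Finset.sum_filter, ← Finset.sum_filter]
    have j2fix' : ∀ p : Perm V × Perm V,
        p ∈ Finset.univ.filter (fun p : Perm V × Perm V => PairCond E₂ f p ∧ p.2 u = v) →
        (p.2 * Equiv.swap u v) v = v := by
      intro p hp
      rw [Perm.mul_apply, hswap_v]
      exact (Finset.mem_filter.mp hp).2.2
    have j1fix' : ∀ p : Perm V × Perm V,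
        p ∈ Finset.univ.filter (fun p : Perm V × Perm V => PairCond E₂ f p ∧ p.2 u = v) →
        p.1 v = v := by
      intro p hp
      obtain ⟨-, hcond, h2uv⟩ := Finset.mem_filter.mp hp
      rcases hcond.1 v with h | h
      · exact h
      · exact absurd (p.2.injective (h2uv.trans h.symm)) hne
    have expandII_mem : ∀ q : Perm {x : V // x ≠ v} × Perm {x : V // x ≠ v},
        PairCond E'' f'' q → ¬ CI q →
        PairCond E₂ f (Perm.ofSubtype q.1, Perm.ofSubtype q.2 * Equiv.swap u v) ∧
          (Perm.ofSubtype q.2 * Equiv.swap u v) u = v := by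
      rintro ⟨q1, q2⟩ ⟨hd, hq1, hq2, hqf1, hqf2⟩ hCI
      simp only at hd hq1 hq2 hqf1 hqf2
      simp only [hCIdef, not_or, not_not, not_and] at hCI
      obtain ⟨hfix1, hsub⟩ := hCI
      have hσ₂u : (Perm.ofSubtype q2 * Equiv.swap u v) u = v := by
        rw [Perm.mul_apply, hswap_u, ofSubtype_fix_v]
      have hfix1' : Perm.ofSubtype q1 u = u := by
        rw [ofSubtype_apply_ne q1 hne]
        exact congrArg Subtype.val hfix1
      refine ⟨⟨?_, ?_, ?_, ?_, ?_⟩, hσ₂u⟩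
      · -- disjoint
        intro x
        by_cases hxv : x = v
        · rw [hxv]
          exact Or.inl (ofSubtype_fix_v q1)
        by_cases hxu : x = u
        · rw [hxu]
          exact Or.inl hfix1'
        · rcases hd ⟨x, hxv⟩ with h | h
          · refine Or.inl ?_
            rw [ofSubtype_apply_ne q1 hxv, h]
          · refine Or.inr ?_
            rw [Perm.mul_apply, hswap_ne x hxu hxv, ofSubtype_apply_ne q2 hxv, h]
      · -- σ₁ E₂-condition
        intro w hw
        simp only at hw ⊢
        by_cases hwv : w = v
        · rw [hwv] at hw
          exact absurd (ofSubtype_fix_v q1) hw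
        by_cases hwu : w = u
        · rw [hwu] at hw
          exact absurd hfix1' hw
        · rw [ofSubtype_apply_ne q1 hwv] at hw ⊢
          have hmv : q1 ⟨w, hwv⟩ ≠ ⟨w, hwv⟩ := fun hc => hw (by rw [hc])
          have h5 := hq1 _ hmv
          rw [hE''mem] at h5
          have h6 : ((if w = u then v else w : V),
              ((q1 ⟨w, hwv⟩ : { x : V // x ≠ v }) : V)) ∈ E₂ := h5
          rw [if_neg hwu] at h6
          exact h6
      · -- σ₂ non-E₂-condition
        intro w hw
        simp only at hw ⊢
        by_cases hwu : w = u
        · rw [hwu] at hw ⊢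
          rw [hσ₂u]
          exact hvE₂
        by_cases hwv : w = v
        · rw [hwv] at hw ⊢
          rw [Perm.mul_apply, hswap_v, ofSubtype_apply_ne q2 hne] at hw ⊢
          by_cases hmv : q2 ⟨u, hne⟩ = ⟨u, hne⟩
          · rw [hmv]
            exact hsub hmv
          · have h5 := hq2 ⟨u, hne⟩ hmv
            rw [hE''mem] at h5
            have h6 : ¬ ((if u = u then v else u : V),
                ((q2 ⟨u, hne⟩ : { x : V // x ≠ v }) : V)) ∈ E₂ := h5
            rw [if_pos rfl] at h6
            exact h6
        · rw [Perm.mul_apply, hswap_ne w hwu hwv, ofSubtype_apply_ne q2 hwv] at hw ⊢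
          have hmv : q2 ⟨w, hwv⟩ ≠ ⟨w, hwv⟩ := fun hc => hw (by rw [hc])
          have h5 := hq2 _ hmv
          rw [hE''mem] at h5
          have h6 : ¬ ((if w = u then v else w : V),
              ((q2 ⟨w, hwv⟩ : { x : V // x ≠ v }) : V)) ∈ E₂ := h5
          rw [if_neg hwu] at h6
          exact h6
      · -- f σ₁
        intro w
        simp only
        by_cases hwv : w = v
        · rw [hwv, ofSubtype_fix_v]
        · rw [ofSubtype_apply_ne q1 hwv]
          exact hqf1 ⟨w, hwv⟩
      · -- f σ₂
        intro w
        simp only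
        by_cases hwu : w = u
        · rw [hwu, hσ₂u, hfuv]
        by_cases hwv : w = v
        · rw [hwv]
          rw [Perm.mul_apply, hswap_v, ofSubtype_apply_ne q2 hne]
          have h5 := hqf2 ⟨u, hne⟩
          simp only [hf''def] at h5
          exact h5.trans hfuv
        · rw [Perm.mul_apply, hswap_ne w hwu hwv, ofSubtype_apply_ne q2 hwv]
          exact hqf2 ⟨w, hwv⟩
    refine (Finset.sum_bij'
      (fun (q : Perm {x : V // x ≠ v} × Perm {x : V // x ≠ v}) (hq : q ∈
          Finset.univ.filter (fun q => PairCond E'' f'' q ∧ ¬ CI q)) =>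
        ((Perm.ofSubtype q.1, Perm.ofSubtype q.2 * Equiv.swap u v) : Perm V × Perm V))
      (fun (p : Perm V × Perm V) (hp : p ∈ Finset.univ.filter
          (fun p : Perm V × Perm V => PairCond E₂ f p ∧ p.2 u = v)) =>
        (p.1.subtypePerm (fix_iff_of_fix (j1fix' p hp)),
          (p.2 * Equiv.swap u v).subtypePerm (fix_iff_of_fix (j2fix' p hp))))
      ?_ ?_ ?_ ?_ ?_).symm
    · -- maps into
      intro q hq
      obtain ⟨-, hq'⟩ := Finset.mem_filter.mp hq
      rw [Finset.mem_filter]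
      exact ⟨Finset.mem_univ _, (expandII_mem q hq'.1 hq'.2).1, (expandII_mem q hq'.1 hq'.2).2⟩
    · -- contraction into
      intro p hp
      obtain ⟨-, hcond, h2uv⟩ := Finset.mem_filter.mp hp
      obtain ⟨hd, hp1, hp2, hpf1, hpf2⟩ := hcond
      have h1v : p.1 v = v := j1fix' p hp
      have h2vne : p.2 v ≠ v := fun h => absurd (p.2.injective (h2uv.trans h.symm)) hne
      have h1u : p.1 u = u := by
        rcases hd u with h | h
        · exact h
        · exact absurd h (by rw [h2uv]; exact Ne.symm hne)
      rw [Finset.mem_filter]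
      refine ⟨Finset.mem_univ _, ⟨?_, ?_, ?_, ?_, ?_⟩, ?_⟩
      · -- disjoint
        rintro ⟨x, hxv⟩
        by_cases hxu : x = u
        · refine Or.inl (Subtype.ext ?_)
          show p.1 x = x
          rw [hxu]
          exact h1u
        · rcases hd x with h | h
          · exact Or.inl (Subtype.ext h)
          · refine Or.inr (Subtype.ext ?_)
            show (p.2 * Equiv.swap u v) x = x
            rw [Perm.mul_apply, hswap_ne x hxu hxv]
            exact h
      · -- q1 E''-cond
        rintro ⟨x, hxv⟩ hx
        rw [hE''mem]
        show ((if x = u then v else x : V), p.1 x) ∈ E₂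
        have hxu : x ≠ u := by
          intro hc
          apply hx
          refine Subtype.ext ?_
          show p.1 x = x
          rw [hc]
          exact h1u
        rw [if_neg hxu]
        have hmv : p.1 x ≠ x := fun hc => hx (Subtype.ext (by exact hc))
        exact hp1 x hmv
      · -- q2 non-E''-cond
        rintro ⟨x, hxv⟩ hx
        rw [hE''mem]
        show ¬ ((if x = u then v else x : V), p.2 (Equiv.swap u v x)) ∈ E₂
        by_cases hxu : x = u
        · rw [hxu]
          rw [if_pos rfl, hswap_u]
          exact hp2 v h2vne
        · rw [if_neg hxu, hswap_ne x hxu hxv]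
          have hmv : p.2 x ≠ x := by
            intro hc
            apply hx
            refine Subtype.ext ?_
            show (p.2 * Equiv.swap u v) x = x
            rw [Perm.mul_apply, hswap_ne x hxu hxv]
            exact hc
          exact hp2 x hmv
      · -- f q1
        rintro ⟨x, hxv⟩
        show f (p.1 x) = f x
        exact hpf1 x
      · -- f q2
        rintro ⟨x, hxv⟩
        show f (p.2 (Equiv.swap u v x)) = f x
        by_cases hxu : x = u
        · rw [hxu, hswap_u]
          exact (hpf2 v).trans hfuv.symm
        · rw [hswap_ne x hxu hxv]
          exact hpf2 x
      · -- ¬ CI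
        simp only [hCIdef, not_or, not_not, not_and]
        constructor
        · refine Subtype.ext ?_
          show p.1 u = u
          exact h1u
        · intro hfix2
          have h7 : p.2 v = u := by
            have := congrArg Subtype.val hfix2
            have h8 : (p.2 * Equiv.swap u v) u = u := this
            rw [Perm.mul_apply, hswap_u] at h8
            exact h8
          have := hp2 v h2vne
          rw [h7] at this
          exact this
    · -- left inverse (q side)
      intro q hq
      refine Prod.ext ?_ ?_
      · refine Equiv.ext fun x => Subtype.ext ?_
        show Perm.ofSubtype q.1 (x : V) = ((q.1 x : { x : V // x ≠ v }) : V)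
        rw [ofSubtype_apply_ne q.1 x.2]
      · refine Equiv.ext fun x => Subtype.ext ?_
        show ((Perm.ofSubtype q.2 * Equiv.swap u v) * Equiv.swap u v) (x : V)
            = ((q.2 x : { x : V // x ≠ v }) : V)
        rw [mul_assoc, Equiv.swap_mul_self, mul_one]
        rw [ofSubtype_apply_ne q.2 x.2]
    · -- right inverse (p side)
      intro p hp
      have h9 : Perm.ofSubtype ((p.2 * Equiv.swap u v).subtypePerm
          (p := fun y : V => y ≠ v) (fix_iff_of_fix (j2fix' p hp))) = p.2 * Equiv.swap u v :=
        Perm.ofSubtype_subtypePerm _ (fun x hx hxv => hx (by rw [hxv]; exact j2fix' p hp))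
      have h10 : Perm.ofSubtype (p.1.subtypePerm (p := fun y : V => y ≠ v) (fix_iff_of_fix (j1fix' p hp))) = p.1 :=
        Perm.ofSubtype_subtypePerm _ (fun x hx hxv => hx (by rw [hxv]; exact j1fix' p hp))
      refine Prod.ext ?_ ?_
      · exact h10
      · show Perm.ofSubtype ((p.2 * Equiv.swap u v).subtypePerm
          (fix_iff_of_fix (j2fix' p hp))) * Equiv.swap u v = p.2
        rw [h9, mul_assoc, Equiv.swap_mul_self, mul_one]
    · -- weights
      intro q hq
      have : Perm.sign (Perm.ofSubtype q.1) = Perm.sign q.1 := Perm.sign_ofSubtype q.1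
      rw [this]
  -- assemble
  have hsum : pairSum E₂ f = pairSum E f
      - (∑ p : Perm V × Perm V,
          if PairCond E f p ∧ p.1 u = v then ((Perm.sign p.1 : ℤˣ) : ℤ) else 0)
      + (∑ p : Perm V × Perm V,
          if PairCond E₂ f p ∧ p.2 u = v then ((Perm.sign p.1 : ℤˣ) : ℤ) else 0) := by
    rw [pairSum, pairSum, Finset.sum_congr rfl (fun p _ => key p),
      Finset.sum_add_distrib, Finset.sum_sub_distrib]
  have hsplitE'' : pairSum E'' f'' =
      (∑ q : Perm {x : V // x ≠ v} × Perm {x : V // x ≠ v},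
        if PairCond E'' f'' q ∧ CI q then ((Perm.sign q.1 : ℤˣ) : ℤ) else 0)
      + (∑ q : Perm {x : V // x ≠ v} × Perm {x : V // x ≠ v},
        if PairCond E'' f'' q ∧ ¬ CI q then ((Perm.sign q.1 : ℤˣ) : ℤ) else 0) := by
    rw [pairSum, ← Finset.sum_add_distrib]
    refine Finset.sum_congr rfl fun q _ => ?_
    by_cases h1 : PairCond E'' f'' q
    · by_cases h2 : CI q
      · rw [if_pos h1, if_pos ⟨h1, h2⟩, if_neg (fun hc => hc.2 h2)]; ring
      · rw [if_pos h1, if_neg (fun hc => h2 hc.2), if_pos ⟨h1, h2⟩]; ring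
    · rw [if_neg h1, if_neg (fun hc => h1 hc.1), if_neg (fun hc => h1 hc.1)]; ring
  have hBneg : (∑ p : Perm V × Perm V,
        if PairCond E f p ∧ p.1 u = v then ((Perm.sign p.1 : ℤˣ) : ℤ) else 0) =
      - (∑ q : Perm {x : V // x ≠ v} × Perm {x : V // x ≠ v},
        if PairCond E'' f'' q ∧ CI q then ((Perm.sign q.1 : ℤˣ) : ℤ) else 0) := by
    rw [hB, ← Finset.sum_neg_distrib]
    refine Finset.sum_congr rfl fun q _ => ?_
    by_cases h1 : PairCond E'' f'' q ∧ CI q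
    · rw [if_pos h1, if_pos h1]
    · rw [if_neg h1, if_neg h1]; ring
  rw [hsum, hBneg, hA, hsplitE'']
  ring

end PairSurgery


/-! ### The induction -/

open Classical in
noncomputable def activeS (E : Set (V × V)) (f : V → ℕ+) : Finset (V × V) :=
  (E.toFinite.toFinset).filter (fun e => e.1 ≠ e.2 ∧ f e.1 = f e.2)

lemma base_of_active_empty (E : Set (V × V)) (f : V → ℕ+) (h : activeS E f = ∅) :
    (redeiBergeCount E f : ℤ) = pairSum E f := by
  classical
  apply base_case
  intro a b hE hab hfab
  have : (a, b) ∈ activeS E f := by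
    rw [activeS, Finset.mem_filter]
    exact ⟨by rw [Set.Finite.mem_toFinset]; exact hE, hab, hfab⟩
  rw [h] at this
  exact absurd this (Finset.notMem_empty _)

end RedeiBergeAux

namespace RedeiBergeAux

universe u

theorem partA (n : ℕ) : ∀ (W : Type u) [Fintype W] [DecidableEq W]
    (E : Set (W × W)) (f : W → ℕ+), Fintype.card W = n →
    (redeiBergeCount E f : ℤ) = pairSum E f := by
  induction n using Nat.strong_induction_on with
  | _ n ihN =>
    intro W _ _ E f hW
    classical
    suffices h : ∀ (m : ℕ) (E : Set (W × W)), (activeS E f).card ≤ m →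
        (redeiBergeCount E f : ℤ) = pairSum E f from h _ E le_rfl
    intro m
    induction m with
    | zero =>
      intro E hE
      exact base_of_active_empty E f (Finset.card_eq_zero.mp (Nat.le_zero.mp hE))
    | succ m ihm =>
      intro E hcard
      by_cases hempty : activeS E f = ∅
      · exact base_of_active_empty E f hempty
      · obtain ⟨⟨a, b⟩, hmem⟩ := Finset.nonempty_iff_ne_empty.mpr hempty
        rw [activeS, Finset.mem_filter] at hmem
        obtain ⟨hEf, hab, hfab⟩ := hmem
        have hEmem : (a, b) ∈ E := by simpa using hEf
        -- the two removal identities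
        have h2 := remN E f a b hEmem hab hfab
        have h3 := pairSum_surgery E f hEmem hab hfab
        -- inner IH for E minus the edge
        have hsub : activeS (E \ {(a, b)}) f ⊆ (activeS E f).erase (a, b) := by
          intro e he
          rw [activeS, Finset.mem_filter] at he
          obtain ⟨he1, he2, he3⟩ := he
          rw [Set.Finite.mem_toFinset, Set.mem_diff] at he1
          rw [Finset.mem_erase]
          refine ⟨by simpa using he1.2, ?_⟩
          rw [activeS, Finset.mem_filter]
          exact ⟨by rw [Set.Finite.mem_toFinset]; exact he1.1, he2, he3⟩
        have hlt : (activeS (E \ {(a, b)}) f).card ≤ m := by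
          have h5 := Finset.card_le_card hsub
          have h6 : ((activeS E f).erase (a, b)).card = (activeS E f).card - 1 :=
            Finset.card_erase_of_mem (by
              rw [activeS, Finset.mem_filter]
              exact ⟨hEf, hab, hfab⟩)
          omega
        have h4 := ihm (E \ {(a, b)}) hlt
        -- outer IH for the contracted digraph
        have hpos : 0 < n := by
          rw [← hW]
          exact Fintype.card_pos_iff.mpr ⟨a⟩
        have hcard' : Fintype.card {x : W // x ≠ b} = n - 1 := by
          rw [← hW]
          have := Fintype.card_subtype_compl (fun x : W => x = b)
          rw [this, Fintype.card_subtype_eq]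
        have h5 := ihN (n - 1) (by omega) {x : W // x ≠ b}
          (contractE (E \ {(a, b)}) a b) (fun x => f x.val) hcard'
        rw [h2] at h4
        push_cast at h4
        rw [h3, ← h5] at h4
        omega

end RedeiBergeAux

open Classical in
/-- Tournament expansion: if `X = (V, E)` is a tournament, then for every coloring `f`,
`N(f, X) = Σ 2^{ψ(σ)}`, summed over all permutations `σ ∈ 𝕊_V(X)` all of whose cycles
have odd length (fixed points have length 1, hence are always odd) and such that `f` is
constant on each cycle of `σ`; here `ψ(σ)` is the number of nontrivial cycles of `σ`. -/
theorem redeiBergeCount_tournament_expansion {V : Type*} [Fintype V] [DecidableEq V]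
    (E : Set (V × V))
    (hloopless : ∀ v : V, (v, v) ∉ E)
    (htour : ∀ u v : V, u ≠ v → ((u, v) ∈ E ↔ (v, u) ∉ E))
    (f : V → ℕ+) :
    redeiBergeCount E f =
      ∑ σ : Equiv.Perm V,
        if MemSVX E σ ∧ (∀ c ∈ σ.cycleFactorsFinset, Odd c.support.card) ∧
            (∀ w : V, f (σ w) = f w)
        then 2 ^ σ.cycleFactorsFinset.card else 0 := by
  have h1 := RedeiBergeAux.partA (Fintype.card V) V E f rfl
  have h2 := RedeiBergeAux.partB E htour f
  have h3 := h1.trans h2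
  exact_mod_cast h3
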